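/- Let E and F be real inner product spaces, a ∈ E, c ∈ F, and y ∈ ℝ. Then the function (w, x) ↦ |⟨a, w⟩·⟨c, x⟩ − y| + (‖a‖·‖c‖/2)·(‖w‖² + ‖x‖²) is convex on E × F. Equivalently, the robust blind deconvolution component function (w, x) ↦ |⟨a, w⟩·⟨c, x⟩ − y| is τ-weakly convex with parameter τ = ‖a‖·‖c‖ (with respect to the product inner product on E × F). -/

import Mathlib

open scoped RealInnerProductSpace

private lemma norm_combo_aux {E : Type*} [NormedAddCommGroup E] [InnerProductSpace ℝ E]
    (t u : ℝ) (htu : t + u = 1) (v w : E) :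
    ‖t • v + u • w‖ ^ 2 + t * u * ‖v - w‖ ^ 2 = t * ‖v‖ ^ 2 + u * ‖w‖ ^ 2 := by
  have h := real_inner_comm v w
  rw [← real_inner_self_eq_norm_sq, ← real_inner_self_eq_norm_sq,
    ← real_inner_self_eq_norm_sq, ← real_inner_self_eq_norm_sq]
  simp only [inner_add_left, inner_add_right, inner_sub_left, inner_sub_right,
    real_inner_smul_left, real_inner_smul_right]
  have hu : u = 1 - t := by linarith
  subst hu
  ring_nf

/-- The robust blind deconvolution component (w,x) ↦ |⟨a,w⟩⟨c,x⟩ − y| is weakly convex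
with parameter ‖a‖·‖c‖ on the product space E × F. -/
theorem robust_blind_deconvolution_weaklyConvex
    {E : Type*} [NormedAddCommGroup E] [InnerProductSpace ℝ E]
    {F : Type*} [NormedAddCommGroup F] [InnerProductSpace ℝ F]
    (a : E) (c : F) (y : ℝ) :
    ConvexOn ℝ Set.univ (fun p : E × F =>
      |⟪a, p.1⟫ * ⟪c, p.2⟫ - y| + ‖a‖ * ‖c‖ / 2 * (‖p.1‖ ^ 2 + ‖p.2‖ ^ 2)) := by
  refine ⟨convex_univ, ?_⟩
  intro p _ q _ t u ht hu htu
  simp only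
  set A := ⟪a, p.1⟫ with hA
  set A' := ⟪a, q.1⟫ with hA'
  set C := ⟪c, p.2⟫ with hC
  set C' := ⟪c, q.2⟫ with hC'
  have h1 : (t • p + u • q).1 = t • p.1 + u • q.1 := rfl
  have h2 : (t • p + u • q).2 = t • p.2 + u • q.2 := rfl
  rw [h1, h2]
  have hiA : ⟪a, t • p.1 + u • q.1⟫ = t * A + u * A' := by
    simp [inner_add_right, real_inner_smul_right]
    rfl
  have hiC : ⟪c, t • p.2 + u • q.2⟫ = t * C + u * C' := by
    simp [inner_add_right, real_inner_smul_right]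
    rfl
  rw [hiA, hiC]
  have hn1 := norm_combo_aux t u htu p.1 q.1
  have hn2 := norm_combo_aux t u htu p.2 q.2
  -- Cauchy–Schwarz pieces
  have hcs1 : |A - A'| ≤ ‖a‖ * ‖p.1 - q.1‖ := by
    have := abs_real_inner_le_norm a (p.1 - q.1)
    rwa [inner_sub_right] at this
  have hcs2 : |C - C'| ≤ ‖c‖ * ‖p.2 - q.2‖ := by
    have := abs_real_inner_le_norm c (p.2 - q.2)
    rwa [inner_sub_right] at this
  have hτ : (0:ℝ) ≤ ‖a‖ * ‖c‖ := mul_nonneg (norm_nonneg a) (norm_nonneg c)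
  have key2 : |A - A'| * |C - C'| ≤
      ‖a‖ * ‖c‖ / 2 * (‖p.1 - q.1‖ ^ 2 + ‖p.2 - q.2‖ ^ 2) := by
    have h1' : |A - A'| * |C - C'| ≤ (‖a‖ * ‖p.1 - q.1‖) * (‖c‖ * ‖p.2 - q.2‖) :=
      mul_le_mul hcs1 hcs2 (abs_nonneg _) (by positivity)
    nlinarith [sq_nonneg (‖p.1 - q.1‖ - ‖p.2 - q.2‖), norm_nonneg (p.1 - q.1),
      norm_nonneg (p.2 - q.2), mul_nonneg (norm_nonneg a) (norm_nonneg c)]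
  have key1 : |(t * A + u * A') * (t * C + u * C') - y| ≤
      t * |A * C - y| + u * |A' * C' - y| + t * u * (|A - A'| * |C - C'|) := by
    have hid : (t * A + u * A') * (t * C + u * C') - y
        = t * (A * C - y) + u * (A' * C' - y) - t * u * ((A - A') * (C - C')) := by
      have : u = 1 - t := by linarith
      subst this; ring
    rw [hid]
    calc |t * (A * C - y) + u * (A' * C' - y) - t * u * ((A - A') * (C - C'))|
        ≤ |t * (A * C - y) + u * (A' * C' - y)| + |t * u * ((A - A') * (C - C'))| :=
          abs_sub _ _
      _ ≤ |t * (A * C - y)| + |u * (A' * C' - y)| + |t * u * ((A - A') * (C - C'))| := by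
          gcongr; exact abs_add_le _ _
      _ = t * |A * C - y| + u * |A' * C' - y| + t * u * (|A - A'| * |C - C'|) := by
          rw [abs_mul, abs_mul, abs_mul, abs_mul (A - A'), abs_of_nonneg ht,
            abs_of_nonneg hu, abs_of_nonneg (mul_nonneg ht hu)]
  have htu' : 0 ≤ t * u := mul_nonneg ht hu
  have hh : t * u * (|A - A'| * |C - C'|) ≤
      t * u * (‖a‖ * ‖c‖ / 2 * (‖p.1 - q.1‖ ^ 2 + ‖p.2 - q.2‖ ^ 2)) :=
    mul_le_mul_of_nonneg_left key2 htu'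
  have smul_eq : ∀ (r : ℝ) (z : ℝ), r • z = r * z := fun _ _ => rfl
  rw [smul_eq, smul_eq]
  have hn : ‖a‖ * ‖c‖ / 2 * (‖t • p.1 + u • q.1‖ ^ 2 + ‖t • p.2 + u • q.2‖ ^ 2)
      = t * (‖a‖ * ‖c‖ / 2 * (‖p.1‖ ^ 2 + ‖p.2‖ ^ 2))
        + u * (‖a‖ * ‖c‖ / 2 * (‖q.1‖ ^ 2 + ‖q.2‖ ^ 2))
        - t * u * (‖a‖ * ‖c‖ / 2 * (‖p.1 - q.1‖ ^ 2 + ‖p.2 - q.2‖ ^ 2)) := by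
    linear_combination (‖a‖ * ‖c‖ / 2) * hn1 + (‖a‖ * ‖c‖ / 2) * hn2
  linarith [key1, hh, hn]
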